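/- Let G be a finite-dimensional vector space over a finite field 𝔽 equipped with a nondegenerate symmetric bilinear form (dot product) ·. Let v_1, v_2, u_1, …, u_m ∈ G be such that neither v_1 nor v_2 lies in the span of {u_1, …, u_m}. Then there exists z ∈ G with v_1·z ≠ 0 and v_2·z ≠ 0, but u_i·z = 0 for all i ∈ [m]. -/
import Mathlib

theorem aux_key
    (𝔽 : Type) [Field 𝔽]
    (G : Type) [AddCommGroup G] [Module 𝔽 G] [FiniteDimensional 𝔽 G]
    (B : G →ₗ[𝔽] G →ₗ[𝔽] 𝔽)
    (hnd : ∀ x : G, (∀ y : G, B x y = 0) → x = 0)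
    (m : ℕ) (v : G) (u : Fin m → G)
    (h : v ∉ Submodule.span 𝔽 (Set.range u)) :
    ∃ z : G, B v z ≠ 0 ∧ ∀ i, B (u i) z = 0 := by
  by_contra hc
  push_neg at hc
  have hker : (⨅ i, LinearMap.ker (B (u i))) ≤ LinearMap.ker (B v) := by
    intro z hz
    simp only [Submodule.mem_iInf, LinearMap.mem_ker] at hz ⊢
    by_contra hne
    obtain ⟨i, hi⟩ := hc z hne
    exact hi (hz i)
  have hmem : B v ∈ Submodule.span 𝔽 (Set.range (fun i => B (u i))) :=
    mem_span_of_iInf_ker_le_ker hker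
  have hrange : Set.range (fun i => B (u i)) = B '' Set.range u := by
    rw [← Set.range_comp]; rfl
  rw [hrange, ← Submodule.map_span] at hmem
  obtain ⟨w, hw, hwv⟩ := hmem
  have hinj : Function.Injective B := by
    intro x y hxy
    have : x - y = 0 := hnd _ (fun z => by
      have := congrArg (fun f => f z) hxy
      simpa [sub_eq_zero] using this)
    exact sub_eq_zero.mp this
  exact h (hinj hwv ▸ hw)

theorem exists_common_nonvanishing_in_orthogonal
    (𝔽 : Type) [Field 𝔽] [Fintype 𝔽]
    (G : Type) [AddCommGroup G] [Module 𝔽 G] [FiniteDimensional 𝔽 G]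
    (B : G →ₗ[𝔽] G →ₗ[𝔽] 𝔽)
    (hsymm : ∀ x y : G, B x y = B y x)
    (hnd : ∀ x : G, (∀ y : G, B x y = 0) → x = 0)
    (m : ℕ) (v₁ v₂ : G) (u : Fin m → G)
    (h₁ : v₁ ∉ Submodule.span 𝔽 (Set.range u))
    (h₂ : v₂ ∉ Submodule.span 𝔽 (Set.range u)) :
    ∃ z : G, B v₁ z ≠ 0 ∧ B v₂ z ≠ 0 ∧ ∀ i, B (u i) z = 0 := by
  obtain ⟨z₁, hz₁, horth₁⟩ := aux_key 𝔽 G B hnd m v₁ u h₁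
  obtain ⟨z₂, hz₂, horth₂⟩ := aux_key 𝔽 G B hnd m v₂ u h₂
  by_cases hA : B v₂ z₁ ≠ 0
  · exact ⟨z₁, hz₁, hA, horth₁⟩
  by_cases hB : B v₁ z₂ ≠ 0
  · exact ⟨z₂, hB, hz₂, horth₂⟩
  push_neg at hA hB
  refine ⟨z₁ + z₂, ?_, ?_, fun i => by simp [horth₁ i, horth₂ i]⟩
  · simpa [hB] using hz₁
  · simpa [hA] using hz₂
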